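/- For every integer b ≥ 1 and every function f : {0,1}^b × {0,1}^b → {0,1}, there exists a family of vectors ψ_a in ℂ^{2^b} ⊕ ℂ^{2^b}, indexed by a ∈ {0,1}^b, that is orthonormal and such that for every w ∈ {0,1}^b the coordinate of ψ_a at the basis index w of the first summand equals (−1)^{f(w,a)} / 2^b. -/

import Mathlib

open Matrix
open scoped ComplexOrder


/-- For every `b ≥ 1` and every Boolean function `f` on pairs of `b`-bit
strings, there is an orthonormal family of vectors `ψ_a` in `ℂ^{2^b} ⊕ ℂ^{2^b}`
(indexed by `b`-bit strings `a`) whose coordinate at basis index `w` of the first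
summand equals `(-1)^{f(w,a)} / 2^b`.  (Lemma 1 of the paper.) -/
theorem stmt0 (b : ℕ) (hb : 1 ≤ b)
    (f : (Fin b → Bool) → (Fin b → Bool) → Bool) :
    ∃ ψ : (Fin b → Bool) → EuclideanSpace ℂ ((Fin b → Bool) ⊕ (Fin b → Bool)),
      Orthonormal ℂ ψ ∧
      ∀ a w : Fin b → Bool,
        ψ a (Sum.inl w) = (if f w a then (-1 : ℂ) else 1) / 2 ^ b := by
  classical
  set A : Matrix (Fin b → Bool) (Fin b → Bool) ℂ :=
    fun w a => (if f w a then (-1 : ℂ) else 1) / 2 ^ b with hA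
  have hcard : (Fintype.card (Fin b → Bool) : ℝ) = 2 ^ b := by
    simp [Fintype.card_fun]
  have habs : ∀ w a, ‖A w a‖ = ((2:ℝ) ^ b)⁻¹ := by
    intro w a
    by_cases h : f w a <;> simp [hA, h, map_div₀, abs_div]
  have hpsd : (1 - Aᴴ * A).PosSemidef := by
    refine Matrix.PosSemidef.of_dotProduct_mulVec_nonneg ((Matrix.isHermitian_one).sub (Matrix.isHermitian_conjTranspose_mul_self A)) fun x => ?_
    rw [Matrix.sub_mulVec, dotProduct_sub, Matrix.one_mulVec,
      ← Matrix.mulVec_mulVec, Matrix.dotProduct_mulVec, Matrix.vecMul_conjTranspose, star_star]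
    have key : ∀ y : (Fin b → Bool) → ℂ,
        star y ⬝ᵥ y = ((∑ i, Complex.normSq (y i) : ℝ) : ℂ) := by
      intro y
      simp [dotProduct, Complex.star_def, Complex.normSq_eq_conj_mul_self]
    rw [key, key, ← Complex.ofReal_sub, Complex.zero_le_real, sub_nonneg]
    have habsw : ∀ w, ‖(A *ᵥ x) w‖ ≤ ((2:ℝ)^b)⁻¹ * ∑ a, ‖x a‖ := by
      intro w
      calc ‖(A *ᵥ x) w‖ ≤ ∑ a, ‖A w a * x a‖ := by
            simpa [Matrix.mulVec, dotProduct] using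
              norm_sum_le Finset.univ (fun a => A w a * x a)
        _ = ∑ a, ((2:ℝ)^b)⁻¹ * ‖x a‖ := by simp [norm_mul, habs]
        _ = _ := by rw [← Finset.mul_sum]
    have hsq : (∑ a, ‖x a‖)^2 ≤ (2:ℝ)^b * ∑ a, ‖x a‖^2 := by
      have h := sq_sum_le_card_mul_sum_sq (s := Finset.univ)
        (f := fun a : Fin b → Bool => ‖x a‖)
      calc (∑ a, ‖x a‖)^2
          ≤ (Finset.univ.card : ℝ) * ∑ a, ‖x a‖^2 := by exact_mod_cast h
        _ = (2:ℝ)^b * ∑ a, ‖x a‖^2 := by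
            rw [Finset.card_univ, hcard]
    have hsumnn : (0:ℝ) ≤ ∑ a, ‖x a‖^2 :=
      Finset.sum_nonneg fun a _ => sq_nonneg _
    calc ∑ w, Complex.normSq ((A *ᵥ x) w)
        ≤ ∑ w : Fin b → Bool, (((2:ℝ)^b)⁻¹ * ∑ a, ‖x a‖)^2 := by
          refine Finset.sum_le_sum fun w _ => ?_
          rw [← Complex.sq_norm]
          exact pow_le_pow_left₀ (norm_nonneg _) (habsw w) 2
      _ = (2:ℝ)^b * ((((2:ℝ)^b)⁻¹)^2 * (∑ a, ‖x a‖)^2) := by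
          rw [Finset.sum_const, Finset.card_univ, nsmul_eq_mul, hcard, mul_pow]
      _ ≤ (2:ℝ)^b * ((((2:ℝ)^b)⁻¹)^2 * ((2:ℝ)^b * ∑ a, ‖x a‖^2)) := by
          gcongr
      _ = ∑ a, ‖x a‖^2 := by
          field_simp
      _ = ∑ a, Complex.normSq (x a) := by simp [← Complex.sq_norm]
  open scoped MatrixOrder in
  set S := CFC.sqrt (1 - Aᴴ * A) with hSdef
  open scoped MatrixOrder in
  have hS2 : S * S = 1 - Aᴴ * A := CFC.sqrt_mul_sqrt_self _ hpsd.nonneg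
  open scoped MatrixOrder in
  have hSH : Sᴴ = S := (CFC.sqrt_nonneg (1 - Aᴴ * A)).posSemidef.1
  set ψ : (Fin b → Bool) → EuclideanSpace ℂ ((Fin b → Bool) ⊕ (Fin b → Bool)) :=
    fun a => WithLp.toLp 2 fun i => Sum.elim (fun w => A w a) (fun w => S w a) i with hψ
  refine ⟨ψ, ?_, fun a w => rfl⟩
  rw [orthonormal_iff_ite]
  intro a a'
  have : (inner ℂ (ψ a) (ψ a') : ℂ) = (Aᴴ * A) a a' + (Sᴴ * S) a a' := by
    simp only [PiLp.inner_apply, WithLp.ofLp_toLp, RCLike.inner_apply, Fintype.sum_sum_type, hψ, Sum.elim_inl,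
      Sum.elim_inr, Matrix.mul_apply, Matrix.conjTranspose_apply, Complex.star_def, mul_comm]
  rw [this, hSH, hS2]
  simp [Matrix.one_apply]
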